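/- Suppose t, A, x, y, z are real numbers with A, x, y, z ∉ {0, 1, -1}, t ≠ 0, and √(t(1 - 1/A²)(1 - 1/x²)(1 - 1/y²)(1 - 1/z²)) = (1 + 1/x)(1 + 1/y)(1 + 1/z). Then there exists a nonzero real k such that, setting γ = ((A²-1)t - A²)kz - ((A²-1)t + A²)k and β = ((A²-1)t + A²)kz - ((A²-1)t - A²)k - 1, the numbers x and y are the two roots of X² - γX + β = 0, i.e., x + y = γ and xy = β; moreover γ² - 4β ≥ 0, β ≠ 0, and 1 - γ + β ≠ 0. -/

import Mathlib

lemma stmt_3_final (x y γ β : ℝ) (hx0 : x ≠ 0) (hy0 : y ≠ 0)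
    (hxm : x - 1 ≠ 0) (hym : y - 1 ≠ 0)
    (h1 : x + y = γ) (h2 : x * y = β) :
    x + y = γ ∧ x * y = β ∧ γ^2 - 4*β ≥ 0 ∧ β ≠ 0 ∧ 1 - γ + β ≠ 0 := by
  subst h1; subst h2
  refine ⟨rfl, rfl, by nlinarith [sq_nonneg (x - y)], mul_ne_zero hx0 hy0, ?_⟩
  intro h
  have h0 : (x - 1) * (y - 1) = 0 := by linear_combination h
  rcases mul_eq_zero.mp h0 with h' | h'
  · exact hxm h'
  · exact hym h'

theorem stmt_3 (t A x y z : ℝ)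
    (hA : A ≠ 0 ∧ A ≠ 1 ∧ A ≠ -1) (hx : x ≠ 0 ∧ x ≠ 1 ∧ x ≠ -1)
    (hy : y ≠ 0 ∧ y ≠ 1 ∧ y ≠ -1) (hz : z ≠ 0 ∧ z ≠ 1 ∧ z ≠ -1)
    (ht : t ≠ 0)
    (heq : Real.sqrt (t * (1 - 1/A^2) * (1 - 1/x^2) * (1 - 1/y^2) * (1 - 1/z^2)) =
      (1 + 1/x) * (1 + 1/y) * (1 + 1/z)) :
    ∃ k : ℝ, k ≠ 0 ∧
      (let γ := ((A^2-1)*t - A^2)*k*z - ((A^2-1)*t + A^2)*k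
       let β := ((A^2-1)*t + A^2)*k*z - ((A^2-1)*t - A^2)*k - 1
       x + y = γ ∧ x * y = β ∧ γ^2 - 4*β ≥ 0 ∧ β ≠ 0 ∧ 1 - γ + β ≠ 0) := by
  obtain ⟨hA0, hA1, hA2⟩ := hA
  obtain ⟨hx0, hx1, hx2⟩ := hx
  obtain ⟨hy0, hy1, hy2⟩ := hy
  obtain ⟨hz0, hz1, hz2⟩ := hz
  have hxp : x + 1 ≠ 0 := fun h => hx2 (by linarith)
  have hyp : y + 1 ≠ 0 := fun h => hy2 (by linarith)
  have hzp : z + 1 ≠ 0 := fun h => hz2 (by linarith)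
  have hxm : x - 1 ≠ 0 := fun h => hx1 (by linarith)
  have hym : y - 1 ≠ 0 := fun h => hy1 (by linarith)
  have hzm : z - 1 ≠ 0 := fun h => hz1 (by linarith)
  have hAsq : A^2 ≠ 0 := pow_ne_zero _ hA0
  have hrx : (1 + 1/x) ≠ 0 := by
    intro h; apply hxp; field_simp at h; linarith
  have hry : (1 + 1/y) ≠ 0 := by
    intro h; apply hyp; field_simp at h; linarith
  have hrz : (1 + 1/z) ≠ 0 := by
    intro h; apply hzp; field_simp at h; linarith
  have hr : (1 + 1/x) * (1 + 1/y) * (1 + 1/z) ≠ 0 := mul_ne_zero (mul_ne_zero hrx hry) hrz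
  have hrpos : 0 < (1 + 1/x) * (1 + 1/y) * (1 + 1/z) :=
    lt_of_le_of_ne (heq ▸ Real.sqrt_nonneg _) (Ne.symm hr)
  have hspos : 0 < t * (1 - 1/A^2) * (1 - 1/x^2) * (1 - 1/y^2) * (1 - 1/z^2) :=
    Real.sqrt_pos.mp (heq ▸ hrpos)
  have hs : t * (1 - 1/A^2) * (1 - 1/x^2) * (1 - 1/y^2) * (1 - 1/z^2) =
      ((1 + 1/x) * (1 + 1/y) * (1 + 1/z))^2 := by
    rw [← heq, Real.sq_sqrt hspos.le]
  field_simp at hs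
  have hne : ((x*y*z)^2 * ((x+1)*(y+1)*(z+1))) ≠ 0 :=
    mul_ne_zero (pow_ne_zero _ (mul_ne_zero (mul_ne_zero hx0 hy0) hz0))
      (mul_ne_zero (mul_ne_zero hxp hyp) hzp)
  have key : (A^2-1)*t*(x-1)*(y-1)*(z-1) = A^2*(x+1)*(y+1)*(z+1) := by
    apply mul_left_cancel₀ hne
    linear_combination (x*y*z)^2 * hs
  have rel : (x*y+1)*(((A^2-1)*t - A^2)*z - ((A^2-1)*t + A^2)) =
      (x+y)*(((A^2-1)*t + A^2)*z - ((A^2-1)*t - A^2)) := by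
    linear_combination key
  by_cases hab : ((A^2-1)*t - A^2)*z - ((A^2-1)*t + A^2) = 0
  · -- a*z - b = 0; then b*z - a ≠ 0 and x + y = 0
    have hba : ((A^2-1)*t + A^2)*z - ((A^2-1)*t - A^2) ≠ 0 := by
      intro h
      have h0 : (-(2*A^2)) * (z+1) = 0 := by linear_combination hab - h
      rcases mul_eq_zero.mp h0 with h' | h'
      · exact hAsq (by linarith)
      · exact hzp h'
    have hS : x + y = 0 := by
      have h0 : (x+y)*(((A^2-1)*t + A^2)*z - ((A^2-1)*t - A^2)) = 0 := by
        linear_combination -rel + (x*y+1)*hab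
      exact (mul_eq_zero.mp h0).resolve_right hba
    have hP : x*y + 1 ≠ 0 := by
      intro h
      have h0 : (x-1)*(x+1) = 0 := by linear_combination -h + x*hS
      rcases mul_eq_zero.mp h0 with h' | h'
      · exact hxm h'
      · exact hxp h'
    refine ⟨(x*y+1)/(((A^2-1)*t + A^2)*z - ((A^2-1)*t - A^2)), div_ne_zero hP hba, ?_⟩
    refine stmt_3_final x y _ _ hx0 hy0 hxm hym ?_ ?_
    · rw [hS]; field_simp
      linear_combination (-(x*y+1))*hab
    · field_simp
      ring
  · -- a*z - b ≠ 0
    have hS : x + y ≠ 0 := by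
      intro h
      have h0 : (x*y+1)*(((A^2-1)*t - A^2)*z - ((A^2-1)*t + A^2)) = 0 := by
        linear_combination rel + (((A^2-1)*t + A^2)*z - ((A^2-1)*t - A^2))*h
      have hP1 : x*y + 1 = 0 := (mul_eq_zero.mp h0).resolve_right hab
      have h1 : (x-1)*(x+1) = 0 := by linear_combination -hP1 + x*h
      rcases mul_eq_zero.mp h1 with h' | h'
      · exact hxm h'
      · exact hxp h'
    refine ⟨(x+y)/(((A^2-1)*t - A^2)*z - ((A^2-1)*t + A^2)), div_ne_zero hS hab, ?_⟩
    refine stmt_3_final x y _ _ hx0 hy0 hxm hym ?_ ?_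
    · field_simp
    · field_simp
      linear_combination rel
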